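/- Let Σ be a 26-letter alphabet containing distinct letters A and D, and let X be the subshift of Σ^ℤ defined by forbidding the single word ADD. Then the independence entropy of X equals (1/2)·log 25 + (1/2)·log 26. -/

import Mathlib

open Filter

/-- A finite word over a 26-letter alphabet is in the language of the subshift forbidding
the single word `ADD` iff it contains no occurrence of `a d d` (consecutive positions). -/
def addLegal (a d : Fin 26) {n : ℕ} (w : Fin n → Fin 26) : Prop :=
  ∀ i j k : Fin n, (i : ℕ) + 1 = (j : ℕ) → (j : ℕ) + 1 = (k : ℕ) →
    ¬(w i = a ∧ w j = d ∧ w k = d)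

/-- A string of nonempty subsets of the alphabet is independently legal if every
selection avoids the pattern `ADD`. -/
def addIndepLegal (a d : Fin 26) {n : ℕ} (A : Fin n → Finset (Fin 26)) : Prop :=
  (∀ i, (A i).Nonempty) ∧ ∀ w : Fin n → Fin 26, (∀ i, w i ∈ A i) → addLegal a d w

/-- The maximal independence score of independently legal strings of length `n`. -/
noncomputable def addMaxScore (a d : Fin 26) (n : ℕ) : ℝ :=
  sSup {r : ℝ | ∃ A : Fin n → Finset (Fin 26), addIndepLegal a d A ∧
    r = ∑ i, Real.log ((A i).card)}

set_option maxHeartbeats 1000000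

def addFnum (n : ℕ) : ℕ := 26 ^ (n - (n-1)/2) * 25 ^ ((n-1)/2)

lemma addFnum_rec (n : ℕ) (hn : 1 ≤ n) : addFnum (n+2) = 650 * addFnum n := by
  unfold addFnum
  have h1 : (n+2-1)/2 = (n-1)/2 + 1 := by omega
  have h3 : n + 2 - ((n-1)/2 + 1) = (n - (n-1)/2) + 1 := by
    have : (n-1)/2 ≤ n := by omega
    omega
  rw [h1, h3, pow_succ, pow_succ]; ring

lemma addProdSplit (N : ℕ) (f : Fin (N+2) → ℕ) :
    ∏ i, f i = (∏ i : Fin N, f ⟨i, by omega⟩) * f ⟨N, by omega⟩ * f ⟨N+1, by omega⟩ := by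
  rw [Fin.prod_univ_castSucc, Fin.prod_univ_castSucc]
  rfl

lemma addStep (a d : Fin 26) (had : a ≠ d) (m : ℕ)
    (A : Fin (m+3) → Finset (Fin 26))
    (hA : ∀ i j k : Fin (m+3), (i:ℕ)+1 = (j:ℕ) → (j:ℕ)+1 = (k:ℕ) →
        ¬(a ∈ A i ∧ d ∈ A j ∧ d ∈ A k))
    (hrec : ∀ B : Fin (m+1) → Finset (Fin 26),
      (∀ i j k : Fin (m+1), (i:ℕ)+1 = (j:ℕ) → (j:ℕ)+1 = (k:ℕ) →
        ¬(a ∈ B i ∧ d ∈ B j ∧ d ∈ B k)) → ∏ i, (B i).card ≤ addFnum (m+1)) :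
    ∏ i, (A i).card ≤ addFnum (m+3) := by
  have p0 : m < m + 3 := by omega
  have p1 : m + 1 < m + 3 := by omega
  have p2 : m + 2 < m + 3 := by omega
  have pm : m < m + 1 := by omega
  have hone : 1 ≤ m + 1 := by omega
  have hcard26 : ∀ (i : Fin (m+3)), (A i).card ≤ 26 := by
    intro i
    simpa using Finset.card_le_univ (A i)
  by_cases hc : (A ⟨m+1, p1⟩).card * (A ⟨m+2, p2⟩).card ≤ 650
  · -- easy case: last two sets contribute at most 650
    obtain ⟨B, hB⟩ : ∃ B : Fin (m+1) → Finset (Fin 26),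
        B = fun i : Fin (m+1) => A ⟨(i:ℕ), lt_trans i.isLt (by omega)⟩ := ⟨_, rfl⟩
    have hBleg : ∀ i j k : Fin (m+1), (i:ℕ)+1=(j:ℕ) → (j:ℕ)+1=(k:ℕ) →
        ¬(a ∈ B i ∧ d ∈ B j ∧ d ∈ B k) := by
      intro i j k hij hjk
      simp only [hB]
      exact hA ⟨i, lt_trans i.isLt (by omega)⟩ ⟨j, lt_trans j.isLt (by omega)⟩
        ⟨k, lt_trans k.isLt (by omega)⟩ hij hjk
    have e1 : ∏ i : Fin (m+3), (A i).card
        = (∏ i : Fin (m+1), (B i).card) * (A ⟨m+1, p1⟩).card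
          * (A ⟨m+2, p2⟩).card := by
      rw [hB]
      exact addProdSplit (m+1) (fun i => (A i).card)
    have hBle := hrec B hBleg
    refine le_trans (le_of_eq e1) ?_
    rw [addFnum_rec (m+1) (Nat.succ_pos m), mul_assoc]
    exact (Nat.mul_le_mul hBle hc).trans (le_of_eq (Nat.mul_comm _ _))
  · -- hard case: both last sets are full
    push_neg at hc
    have h1 : (A ⟨m+1, p1⟩).card = 26 := by
      by_contra h
      have hle : (A ⟨m+1, p1⟩).card ≤ 25 := by
        have := hcard26 ⟨m+1, p1⟩; omega
      have : (A ⟨m+1, p1⟩).card * (A ⟨m+2, p2⟩).card ≤ 25 * 26 :=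
        Nat.mul_le_mul hle (hcard26 _)
      omega
    have h2 : (A ⟨m+2, p2⟩).card = 26 := by
      by_contra h
      have hle : (A ⟨m+2, p2⟩).card ≤ 25 := by
        have := hcard26 ⟨m+2, p2⟩; omega
      have : (A ⟨m+1, p1⟩).card * (A ⟨m+2, p2⟩).card ≤ 26 * 25 :=
        Nat.mul_le_mul (hcard26 _) hle
      omega
    have hd1 : d ∈ A ⟨m+1, p1⟩ := by
      have := Finset.eq_univ_of_card _ (h1.trans (Fintype.card_fin 26).symm)
      rw [this]; exact Finset.mem_univ d
    have hd2 : d ∈ A ⟨m+2, p2⟩ := by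
      have := Finset.eq_univ_of_card _ (h2.trans (Fintype.card_fin 26).symm)
      rw [this]; exact Finset.mem_univ d
    have hna : a ∉ A ⟨m, p0⟩ := fun hma =>
      hA ⟨m, p0⟩ ⟨m+1, p1⟩ ⟨m+2, p2⟩ rfl rfl ⟨hma, hd1, hd2⟩
    obtain ⟨B, hB⟩ : ∃ B : Fin (m+1) → Finset (Fin 26),
        B = fun i : Fin (m+1) => if (i:ℕ) = m then A ⟨m, p0⟩ ∪ {d}ᶜ
          else A ⟨(i:ℕ), lt_trans i.isLt (by omega)⟩ := ⟨_, rfl⟩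
    have hBleg : ∀ i j k : Fin (m+1), (i:ℕ)+1=(j:ℕ) → (j:ℕ)+1=(k:ℕ) →
        ¬(a ∈ B i ∧ d ∈ B j ∧ d ∈ B k) := by
      intro i j k hij hjk ⟨hai, hdj, hdk⟩
      have hkm : (k:ℕ) ≤ m := by omega
      have hi : (i:ℕ) ≠ m := by omega
      have hj : (j:ℕ) ≠ m := by omega
      simp only [hB] at hai hdj hdk
      simp only [if_neg hi] at hai
      simp only [if_neg hj] at hdj
      have hdk' : d ∈ A ⟨(k:ℕ), lt_trans k.isLt (by omega)⟩ := by
        by_cases hk : (k:ℕ) = m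
        · simp only [if_pos hk] at hdk
          rcases Finset.mem_union.mp hdk with h | h
          · have heq : (⟨(k:ℕ), lt_trans k.isLt (by omega)⟩ : Fin (m+3)) = ⟨m, p0⟩ :=
              Fin.ext hk
            rw [heq]; exact h
          · exact absurd (Finset.mem_compl.mp h) (by simp)
        · simpa only [if_neg hk] using hdk
      exact hA ⟨i, lt_trans i.isLt (by omega)⟩ ⟨j, lt_trans j.isLt (by omega)⟩
        ⟨k, lt_trans k.isLt (by omega)⟩ hij hjk ⟨hai, hdj, hdk'⟩
    obtain ⟨R, hR⟩ : ∃ R : ℕ,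
        R = ∏ i ∈ Finset.univ.erase (⟨m, pm⟩ : Fin (m+1)), (B i).card := ⟨_, rfl⟩
    have hBsplit : ∏ i, (B i).card = (B ⟨m, pm⟩).card * R := by
      rw [hR]
      exact (Finset.mul_prod_erase _ _ (Finset.mem_univ _)).symm
    have hAsplit : ∏ i : Fin (m+1), (A ⟨(i:ℕ), lt_trans i.isLt (by omega)⟩).card
        = (A ⟨m, p0⟩).card * R := by
      rw [hR, ← Finset.mul_prod_erase Finset.univ
        (fun i : Fin (m+1) => (A ⟨(i:ℕ), lt_trans i.isLt (by omega)⟩).card)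
        (Finset.mem_univ (⟨m, pm⟩ : Fin (m+1)))]
      congr 1
      refine Finset.prod_congr rfl (fun i hi => ?_)
      have hne : (i:ℕ) ≠ m := fun h => (Finset.mem_erase.mp hi).1 (Fin.ext h)
      simp only [hB, if_neg hne]
    have hBL : B ⟨m, pm⟩ = A ⟨m, p0⟩ ∪ {d}ᶜ := by
      rw [hB]; simp
    have hkey : (A ⟨m, p0⟩).card * 676 ≤ 650 * (B ⟨m, pm⟩).card := by
      by_cases hdm : d ∈ A ⟨m, p0⟩
      · have hBu : B ⟨m, pm⟩ = Finset.univ := by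
          rw [hBL]
          apply Finset.eq_univ_of_forall
          intro x
          by_cases hx : x = d
          · exact Finset.mem_union_left _ (hx ▸ hdm)
          · exact Finset.mem_union_right _ (by simp [hx])
        have hc25 : (A ⟨m, p0⟩).card ≤ 25 := by
          have hsub : A ⟨m, p0⟩ ⊆ {a}ᶜ := by
            intro x hx
            simp only [Finset.mem_compl, Finset.mem_singleton]
            rintro rfl; exact hna hx
          have h := Finset.card_le_card hsub
          have hcc : ({a}ᶜ : Finset (Fin 26)).card = 25 := by
            rw [Finset.card_compl, Finset.card_singleton, Fintype.card_fin]
          omega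
        have hBu26 : (B ⟨m, pm⟩).card = 26 := by
          rw [hBu, Finset.card_univ, Fintype.card_fin]
        omega
      · have hc24 : (A ⟨m, p0⟩).card ≤ 24 := by
          have hsub : A ⟨m, p0⟩ ⊆ ({a, d} : Finset (Fin 26))ᶜ := by
            intro x hx
            simp only [Finset.mem_compl, Finset.mem_insert, Finset.mem_singleton]
            push_neg
            constructor
            · rintro rfl; exact hna hx
            · rintro rfl; exact hdm hx
          have h := Finset.card_le_card hsub
          have hcc : (({a, d} : Finset (Fin 26))ᶜ).card = 24 := by
            rw [Finset.card_compl, Finset.card_insert_of_notMem (by simpa using had),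
              Finset.card_singleton, Fintype.card_fin]
          omega
        have h25 : 25 ≤ (B ⟨m, pm⟩).card := by
          have hsub : ({d}ᶜ : Finset (Fin 26)) ⊆ B ⟨m, pm⟩ :=
            hBL ▸ Finset.subset_union_right
          have h := Finset.card_le_card hsub
          have hcc : ({d}ᶜ : Finset (Fin 26)).card = 25 := by
            rw [Finset.card_compl, Finset.card_singleton, Fintype.card_fin]
          omega
        omega
    have e1 : ∏ i : Fin (m+3), (A i).card
        = (∏ i : Fin (m+1), (A ⟨(i:ℕ), lt_trans i.isLt (by omega)⟩).card)
          * (A ⟨m+1, p1⟩).card * (A ⟨m+2, p2⟩).card :=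
      addProdSplit (m+1) (fun i => (A i).card)
    have hBle := hrec B hBleg
    refine le_trans (le_of_eq e1) ?_
    rw [hAsplit, h1, h2, addFnum_rec (m+1) (Nat.succ_pos m)]
    calc (A ⟨m, p0⟩).card * R * 26 * 26
        = ((A ⟨m, p0⟩).card * 676) * R := by ring
      _ ≤ (650 * (B ⟨m, pm⟩).card) * R := Nat.mul_le_mul_right _ hkey
      _ = 650 * ((B ⟨m, pm⟩).card * R) := by ring
      _ = 650 * ∏ i, (B i).card := by rw [← hBsplit]
      _ ≤ 650 * addFnum (m+1) := Nat.mul_le_mul_left _ hBle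

lemma addProd_le (a d : Fin 26) (had : a ≠ d) :
    ∀ n (A : Fin n → Finset (Fin 26)),
      (∀ i j k : Fin n, (i:ℕ)+1 = (j:ℕ) → (j:ℕ)+1 = (k:ℕ) →
        ¬(a ∈ A i ∧ d ∈ A j ∧ d ∈ A k)) →
      ∏ i, (A i).card ≤ addFnum n := by
  intro n
  induction n using Nat.strong_induction_on with
  | _ n ih =>
    have hcard26 : ∀ m (B : Fin m → Finset (Fin 26)) (i : Fin m), (B i).card ≤ 26 := by
      intro m B i
      simpa using Finset.card_le_univ (B i)
    match n with
    | 0 => intro A _; simp [addFnum]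
    | 1 =>
      intro A _
      have := hcard26 1 A 0
      simpa [addFnum] using this
    | 2 =>
      intro A _
      rw [Fin.prod_univ_two]
      have h2 : addFnum 2 = 676 := by simp [addFnum]
      rw [h2]
      calc (A 0).card * (A 1).card ≤ 26 * 26 :=
            Nat.mul_le_mul (hcard26 2 A 0) (hcard26 2 A 1)
        _ = 676 := by norm_num
    | (m+3) =>
      intro A hA
      exact addStep a d had m A hA (ih (m+1) (by omega))

lemma addIndepLegal_iff (a d : Fin 26) {n : ℕ} (A : Fin n → Finset (Fin 26)) :
    addIndepLegal a d A ↔ (∀ i, (A i).Nonempty) ∧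
      ∀ i j k : Fin n, (i:ℕ)+1 = (j:ℕ) → (j:ℕ)+1 = (k:ℕ) →
        ¬(a ∈ A i ∧ d ∈ A j ∧ d ∈ A k) := by
  constructor
  · rintro ⟨hne, hleg⟩
    refine ⟨hne, fun i j k hij hjk ⟨ha, hd1, hd2⟩ => ?_⟩
    have hji : j ≠ i := fun h => by rw [h] at hij; omega
    have hki : k ≠ i := fun h => by rw [h] at hjk; omega
    have hkj : k ≠ j := fun h => by rw [h] at hjk; omega
    set w : Fin n → Fin 26 := fun p =>
      if p = i then a else if p = j then d else if p = k then d else (hne p).choose with hw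
    have hmem : ∀ p, w p ∈ A p := by
      intro p
      simp only [hw]
      split_ifs with h1 h2 h3
      · exact h1 ▸ ha
      · exact h2 ▸ hd1
      · exact h3 ▸ hd2
      · exact (hne p).choose_spec
    exact hleg w hmem i j k hij hjk
      ⟨by simp [hw], by simp [hw, hji], by simp [hw, hki, hkj]⟩
  · rintro ⟨hne, h⟩
    refine ⟨hne, fun w hw i j k hij hjk ⟨h1, h2, h3⟩ => ?_⟩
    exact h i j k hij hjk ⟨h1 ▸ hw i, h2 ▸ hw j, h3 ▸ hw k⟩

def addWit (d : Fin 26) (n : ℕ) : Fin n → Finset (Fin 26) :=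
  fun i => if 2 ≤ (i:ℕ) ∧ (i:ℕ) % 2 = 0 then {d}ᶜ else Finset.univ

lemma addWit_nonempty (d : Fin 26) (n : ℕ) (i : Fin n) : (addWit d n i).Nonempty := by
  unfold addWit
  split_ifs
  · rw [← Finset.card_pos, Finset.card_compl, Finset.card_singleton, Fintype.card_fin]
    norm_num
  · exact Finset.univ_nonempty

lemma addWit_legal (a d : Fin 26) (n : ℕ) :
    ∀ i j k : Fin n, (i:ℕ)+1 = (j:ℕ) → (j:ℕ)+1 = (k:ℕ) →
      ¬(a ∈ addWit d n i ∧ d ∈ addWit d n j ∧ d ∈ addWit d n k) := by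
  intro i j k hij hjk ⟨_, hdj, hdk⟩
  unfold addWit at hdj hdk
  rcases Nat.even_or_odd (j:ℕ) with hj | hj
  · have hcond : 2 ≤ (j:ℕ) ∧ (j:ℕ) % 2 = 0 := by
      rcases hj with ⟨m, hm⟩; omega
    rw [if_pos hcond, Finset.mem_compl, Finset.mem_singleton] at hdj
    exact hdj rfl
  · have hcond : 2 ≤ (k:ℕ) ∧ (k:ℕ) % 2 = 0 := by
      rcases hj with ⟨m, hm⟩; omega
    rw [if_pos hcond, Finset.mem_compl, Finset.mem_singleton] at hdk
    exact hdk rfl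

lemma addFnum_range (n : ℕ) :
    (∏ j ∈ Finset.range n, (if 2 ≤ j ∧ j % 2 = 0 then 25 else 26)) = addFnum n := by
  induction n with
  | zero => simp [addFnum]
  | succ n ih =>
    rw [Finset.prod_range_succ, ih]
    unfold addFnum
    split_ifs with h
    · have h1 : (n+1-1)/2 = (n-1)/2 + 1 := by omega
      have h2 : n+1 - ((n-1)/2 + 1) = n - (n-1)/2 := by omega
      rw [h1, h2, pow_succ]; ring
    · have h1 : (n+1-1)/2 = (n-1)/2 := by omega
      have h2 : n+1 - (n-1)/2 = (n - (n-1)/2) + 1 := by omega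
      rw [h1, h2, pow_succ]; ring

lemma addWit_prod (d : Fin 26) (n : ℕ) :
    ∏ i, (addWit d n i).card = addFnum n := by
  have hcard : ∀ i : Fin n, (addWit d n i).card =
      if 2 ≤ (i:ℕ) ∧ (i:ℕ) % 2 = 0 then 25 else 26 := by
    intro i
    unfold addWit
    split_ifs
    · rw [Finset.card_compl, Finset.card_singleton, Fintype.card_fin]
    · rw [Finset.card_univ, Fintype.card_fin]
  calc ∏ i, (addWit d n i).card
      = ∏ i : Fin n, (if 2 ≤ (i:ℕ) ∧ (i:ℕ) % 2 = 0 then 25 else 26) :=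
        Finset.prod_congr rfl (fun i _ => hcard i)
    _ = ∏ j ∈ Finset.range n, (if 2 ≤ j ∧ j % 2 = 0 then 25 else 26) :=
        Fin.prod_univ_eq_prod_range (fun j => if 2 ≤ j ∧ j % 2 = 0 then 25 else 26) n
    _ = addFnum n := addFnum_range n

lemma addScore_eq (a d : Fin 26) (had : a ≠ d) (n : ℕ) :
    addMaxScore a d n = Real.log (addFnum n) := by
  have hlogsum : ∀ A : Fin n → Finset (Fin 26), (∀ i, (A i).Nonempty) →
      (∑ i, Real.log ((A i).card)) = Real.log (∏ i, (A i).card : ℕ) := by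
    intro A hne
    rw [Nat.cast_prod, Real.log_prod]
    intro i _
    exact_mod_cast (hne i).card_pos.ne'
  have hub : ∀ r ∈ {r : ℝ | ∃ A : Fin n → Finset (Fin 26), addIndepLegal a d A ∧
      r = ∑ i, Real.log ((A i).card)}, r ≤ Real.log (addFnum n) := by
    rintro r ⟨A, hA, rfl⟩
    obtain ⟨hne, hleg⟩ := (addIndepLegal_iff a d A).mp hA
    rw [hlogsum A hne]
    have hle := addProd_le a d had n A hleg
    have hpos : (0:ℝ) < (∏ i, (A i).card : ℕ) := by
      have : ∀ i ∈ Finset.univ, 0 < (A i).card := fun i _ => (hne i).card_pos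
      exact_mod_cast Finset.prod_pos this
    exact Real.log_le_log hpos (by exact_mod_cast hle)
  have hmem : Real.log (addFnum n) ∈ {r : ℝ | ∃ A : Fin n → Finset (Fin 26),
      addIndepLegal a d A ∧ r = ∑ i, Real.log ((A i).card)} := by
    refine ⟨addWit d n, (addIndepLegal_iff a d _).mpr ⟨addWit_nonempty d n, addWit_legal a d n⟩, ?_⟩
    rw [hlogsum _ (addWit_nonempty d n), addWit_prod d n]
  exact le_antisymm (csSup_le ⟨_, hmem⟩ hub) (le_csSup ⟨_, hub⟩ hmem)

/-- For the subshift of a 26-letter alphabet forbidding the single word `ADD`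
(`A ≠ D`), the independence entropy equals `(1/2)·log 25 + (1/2)·log 26`. -/
theorem stmt2 (a d : Fin 26) (had : a ≠ d) :
    Tendsto (fun n : ℕ => addMaxScore a d n / n) atTop
      (nhds (Real.log 25 / 2 + Real.log 26 / 2)) := by
  have hq1 : Tendsto (fun n : ℕ => (((n-1)/2 : ℕ) : ℝ) / n) atTop (nhds (1/2 : ℝ)) := by
    apply tendsto_of_tendsto_of_tendsto_of_le_of_le'
      (g := fun n : ℕ => (1:ℝ)/2 - 1/n) (h := fun _ : ℕ => (1:ℝ)/2)
    · have h0 : Tendsto (fun n : ℕ => (1:ℝ)/n) atTop (nhds 0) :=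
        tendsto_one_div_atTop_nhds_zero_nat
      simpa using (tendsto_const_nhds (x := (1:ℝ)/2)).sub h0
    · exact tendsto_const_nhds
    · filter_upwards [eventually_ge_atTop 1] with n hn
      have h2 : (n:ℝ) - 2 ≤ 2 * (((n-1)/2 : ℕ) : ℝ) := by
        have h : (n:ℕ) ≤ 2 * ((n-1)/2) + 2 := by omega
        have h' : (n:ℝ) ≤ 2 * (((n-1)/2 : ℕ) : ℝ) + 2 := by exact_mod_cast h
        linarith
      have hnpos : (0:ℝ) < n := by exact_mod_cast hn
      rw [le_div_iff₀ hnpos]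
      have key : ((1:ℝ)/2 - 1/(n:ℝ)) * n = n/2 - 1 := by field_simp
      linarith
    · filter_upwards [eventually_ge_atTop 1] with n hn
      have h2 : 2 * (((n-1)/2 : ℕ) : ℝ) ≤ n := by
        have : 2 * ((n-1)/2) ≤ n := by omega
        exact_mod_cast this
      have hnpos : (0:ℝ) < n := by exact_mod_cast hn
      rw [div_le_iff₀ hnpos]
      linarith
  have hlogF : ∀ n : ℕ, 1 ≤ n → Real.log (addFnum n) / n
      = (1 - (((n-1)/2:ℕ):ℝ)/n) * Real.log 26 + ((((n-1)/2:ℕ):ℝ)/n) * Real.log 25 := by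
    intro n hn
    have hq_le : (n-1)/2 ≤ n := by omega
    have hn0 : (n:ℝ) ≠ 0 := by positivity
    unfold addFnum
    rw [Nat.cast_mul, Real.log_mul (by positivity) (by positivity),
      Nat.cast_pow, Nat.cast_pow, Real.log_pow, Real.log_pow, Nat.cast_sub hq_le]
    field_simp
    norm_num
  have hg : Tendsto (fun n : ℕ => (1 - (((n-1)/2:ℕ):ℝ)/n) * Real.log 26
      + ((((n-1)/2:ℕ):ℝ)/n) * Real.log 25) atTop
      (nhds ((1 - 1/2) * Real.log 26 + (1/2) * Real.log 25)) :=
    ((tendsto_const_nhds.sub hq1).mul_const _).add (hq1.mul_const _)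
  have hval : ((1:ℝ) - 1/2) * Real.log 26 + (1/2) * Real.log 25
      = Real.log 25 / 2 + Real.log 26 / 2 := by ring
  rw [← hval]
  apply hg.congr'
  filter_upwards [eventually_ge_atTop 1] with n hn
  rw [addScore_eq a d had n, hlogF n hn]
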